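/- In the affine Hecke algebra AH_k, the element φ = T_1 T_2 ⋯ T_{k-1} y_k satisfies φ² T_{k-1} = T_1 φ². -/

import Mathlib

private lemma braid_aux {A : Type*} [Ring A] (T : ℕ → A) (k : ℕ)
    (hBraid : ∀ i, 1 ≤ i → i + 1 ≤ k - 1 →
      T i * T (i + 1) * T i = T (i + 1) * T i * T (i + 1))
    (hFar : ∀ i j, 1 ≤ i → i ≤ k - 1 → 1 ≤ j → j ≤ k - 1 → i + 1 < j →
      T i * T j = T j * T i) :
    ∀ m, m + 1 ≤ k - 1 →
      T 1 * ((List.range' 1 m).map T).prod * T (m + 1) * ((List.range' 1 m).map T).prod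
      = ((List.range' 1 m).map T).prod * T (m + 1) *
          (((List.range' 1 m).map T).prod * T (m + 1)) := by
  intro m
  induction m with
  | zero => intro _; simp [mul_assoc]
  | succ n ih =>
    intro h
    have ihe := ih (by omega)
    set a := ((List.range' 1 n).map T).prod with ha
    have hrange : List.range' 1 (n + 1) = List.range' 1 n ++ [n + 1] := by
      have := List.range'_concat (step := 1) (s := 1) (n := n)
      simpa [Nat.add_comm] using this
    rw [hrange]
    simp only [List.map_append, List.prod_append, List.map_cons, List.map_nil,
      List.prod_cons, List.prod_nil, mul_one]
    set b := T (n + 1) with hb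
    set c := T (n + 1 + 1) with hcdef
    -- c commutes with a
    have hca : c * a = a * c := by
      refine (Commute.list_prod_right _ _ ?_).eq
      intro x hx
      simp only [List.mem_map, List.mem_range'] at hx
      obtain ⟨j, ⟨hj1, hj2⟩, rfl⟩ := hx
      exact (hFar j (n + 1 + 1) (by omega) (by omega) (by omega) (by omega) (by omega)).symm
    have hbc : b * c * b = c * b * c := hBraid (n + 1) (by omega) (by omega)
    -- pointed versions
    have hca' : ∀ x : A, c * (a * x) = a * (c * x) := fun x => by
      rw [← mul_assoc, hca, mul_assoc]
    have hbc' : ∀ x : A, b * (c * (b * x)) = c * (b * (c * x)) := fun x => by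
      simpa [mul_assoc] using congrArg (· * x) hbc
    have ih' : ∀ x : A, T 1 * (a * (b * (a * x))) = a * (b * (a * (b * x))) := fun x => by
      simpa [mul_assoc] using congrArg (· * x) ihe
    simp only [mul_assoc]
    have hbc2 : b * (c * b) = c * (b * c) := by simpa [mul_assoc] using hbc
    rw [hca', ih', hca', hbc2]



/-- In the affine Hecke algebra `AH_k`, the element `φ = T_1 ⋯ T_{k-1} y_k`
`y_1,…,y_k`), the element `φ = T_1 ⋯ T_{k-1} y_k` satisfies `φ² T_{k-1} = T_1 φ²`. -/
theorem stmt1 (F : Type*) [Field F] (q : F) (hq : q ≠ 0)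
    (A : Type*) [Ring A] [Algebra F A] (k : ℕ)
    (T y : ℕ → A)
    (hTunit : ∀ i, 1 ≤ i → i ≤ k - 1 → IsUnit (T i))
    (hHecke : ∀ i, 1 ≤ i → i ≤ k - 1 → (T i - 1) * (T i + q • (1 : A)) = 0)
    (hBraid : ∀ i, 1 ≤ i → i + 1 ≤ k - 1 →
      T i * T (i + 1) * T i = T (i + 1) * T i * T (i + 1))
    (hFar : ∀ i j, 1 ≤ i → i ≤ k - 1 → 1 ≤ j → j ≤ k - 1 → i + 1 < j →
      T i * T j = T j * T i)
    (hTy : ∀ i, 1 ≤ i → i ≤ k - 1 → T i * y (i + 1) * T i = q • y i)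
    (hyT : ∀ i j, 1 ≤ i → i ≤ k → 1 ≤ j → j ≤ k - 1 → i ≠ j → i ≠ j + 1 →
      y i * T j = T j * y i)
    (hyy : ∀ i j, 1 ≤ i → i ≤ k → 1 ≤ j → j ≤ k → y i * y j = y j * y i) :
    2 ≤ k →
      (((List.range' 1 (k - 1)).map T).prod * y k)
          * (((List.range' 1 (k - 1)).map T).prod * y k) * T (k - 1)
        = T 1 * ((((List.range' 1 (k - 1)).map T).prod * y k)
          * (((List.range' 1 (k - 1)).map T).prod * y k)) := by
  intro hk
  have hrange : List.range' 1 (k - 1) = List.range' 1 (k - 2) ++ [k - 1] := by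
    have h1 : k - 1 = (k - 2) + 1 := by omega
    rw [h1, List.range'_concat]
    congr 1
    simp
    omega
  rw [hrange]
  simp only [List.map_append, List.prod_append, List.map_cons, List.map_nil,
    List.prod_cons, List.prod_nil, mul_one]
  set P := ((List.range' 1 (k - 2)).map T).prod with hP
  set t := T (k - 1) with ht
  set yk := y k with hyk
  set z := y (k - 1) with hz
  -- y k commutes with P
  have hyP : yk * P = P * yk := by
    refine (Commute.list_prod_right _ _ ?_).eq
    intro x hx
    simp only [List.mem_map, List.mem_range'] at hx
    obtain ⟨j, ⟨hj1, hj2⟩, rfl⟩ := hx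
    exact hyT k j (by omega) (by omega) (by omega) (by omega) (by omega) (by omega)
  have hyP' : ∀ x : A, yk * (P * x) = P * (yk * x) := fun x => by
    rw [← mul_assoc, hyP, mul_assoc]
  -- the key Hecke-type relation
  have hTyk : t * yk * t = q • z := by
    have := hTy (k - 1) (by omega) (by omega)
    rwa [show k - 1 + 1 = k from by omega] at this
  have h1 : t * (yk * t) = q • z := by rwa [mul_assoc] at hTyk
  have h2 : ∀ x : A, t * (yk * (t * x)) = q • (z * x) := fun x => by
    simpa [mul_assoc, smul_mul_assoc] using congrArg (· * x) hTyk
  -- the braid identity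
  have hbr := braid_aux T k hBraid hFar (k - 2) (by omega)
  rw [show k - 2 + 1 = k - 1 from by omega] at hbr
  rw [← hP, ← ht] at hbr
  have hbr' : ∀ x : A, T 1 * (P * (t * (P * x))) = P * (t * (P * (t * x))) := fun x => by
    simpa [mul_assoc] using congrArg (· * x) hbr
  have hyz : yk * z = z * yk := hyy k (k - 1) (by omega) (by omega) (by omega) (by omega)
  simp only [mul_assoc]
  rw [h1, hyP', hyP', hbr', h2, mul_smul_comm, hyz]
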